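/- Let f : [0,∞) → [0,∞) be nondecreasing with f(t) → ∞, and suppose f(t) = ln t + b ln ln t + O(1) as t → ∞ for a constant b > 0. Then for an integer k ≥ 0, the integral ∫₀^∞ f(t)^k e^{-f(t)} dt diverges if and only if k ≥ b - 1; consequently the minimal k with divergent integral equals ⌈b⌉ - 1. -/

import Mathlib

open MeasureTheory Filter Asymptotics Set
open scoped ENNReal Topology

lemma aux_notint (T : ℝ) : ¬ IntegrableOn (fun x => (x * Real.log x)⁻¹) (Ioi T) := by
  have A : ∀ᶠ x in atTop, HasDerivAt (fun y => Real.log (Real.log y)) ((x * Real.log x)⁻¹) x := by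
    filter_upwards [Ioi_mem_atTop (1 : ℝ)] with x hx
    have hx1 : (1 : ℝ) < x := hx
    have h1 : HasDerivAt Real.log x⁻¹ x := Real.hasDerivAt_log (by linarith)
    have h2 : HasDerivAt Real.log (Real.log x)⁻¹ (Real.log x) :=
      Real.hasDerivAt_log (ne_of_gt (Real.log_pos hx1))
    have h3 := h2.comp x h1
    refine h3.congr_deriv ?_
    rw [mul_inv_rev]
  have B : Tendsto (fun x => ‖Real.log (Real.log x)‖) atTop atTop :=
    tendsto_norm_atTop_atTop.comp (Real.tendsto_log_atTop.comp Real.tendsto_log_atTop)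
  exact not_integrableOn_of_tendsto_norm_atTop_of_deriv_isBigO_filter atTop (Ioi_mem_atTop T)
    (A.mono fun x hx => hx.differentiableAt) B
    (Filter.EventuallyEq.isBigO (A.mono fun x hx => hx.deriv))

lemma aux_int {p T : ℝ} (hp : p < -1) (hT0 : 0 < T) (hT : 1 ≤ Real.log T) :
    IntegrableOn (fun t => Real.log t ^ p / t) (Ioi T) := by
  have hne : p + 1 ≠ 0 := by linarith
  have key : ∀ x ∈ Ici T, HasDerivAt (fun y => Real.log y ^ (p+1) / (p+1))
      (Real.log x ^ p / x) x := by
    intro x hx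
    have hx0 : 0 < x := lt_of_lt_of_le hT0 hx
    have hlog : 1 ≤ Real.log x := hT.trans (Real.log_le_log hT0 hx)
    have h1 : HasDerivAt Real.log x⁻¹ x := Real.hasDerivAt_log hx0.ne'
    have h2 : HasDerivAt (fun y : ℝ => y ^ (p+1)) ((p+1) * Real.log x ^ (p+1-1)) (Real.log x) :=
      Real.hasDerivAt_rpow_const (Or.inl (by linarith))
    have h3 := (h2.comp x h1).div_const (p+1)
    refine h3.congr_deriv ?_
    have hps : p + 1 - 1 = p := by ring
    rw [hps]
    field_simp
  have nonneg : ∀ x ∈ Ioi T, 0 ≤ Real.log x ^ p / x := by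
    intro x hx
    have hx0 : 0 < x := lt_trans hT0 hx
    have hlog : 1 ≤ Real.log x := hT.trans (Real.log_le_log hT0 hx.le)
    exact div_nonneg (Real.rpow_nonneg (by linarith) _) hx0.le
  have h4 : Tendsto (fun u : ℝ => u ^ (p+1)) atTop (𝓝 0) := by
    simpa only [neg_neg] using tendsto_rpow_neg_atTop (by linarith : 0 < -(p + 1))
  have h5 : Tendsto (fun y => Real.log y ^ (p+1) / (p+1)) atTop (𝓝 0) := by
    simpa using (h4.comp Real.tendsto_log_atTop).div_const (p+1)
  exact integrableOn_Ioi_deriv_of_nonneg' key nonneg h5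

/-- If `f : [0,∞) → [0,∞)` is nondecreasing, tends to infinity, and satisfies
`f t = log t + b * log (log t) + O(1)` with `b > 0`, then
`∫₀^∞ f(t)^k e^{-f(t)} dt = ∞` iff `k ≥ b - 1`, and consequently the minimal such
`k` is `⌈b⌉ - 1`. -/
theorem integral_divergence_classification (f : ℝ → ℝ)
    (hf0 : ∀ t, 0 ≤ t → 0 ≤ f t) (hmono : MonotoneOn f (Ici 0))
    (htend : Tendsto f atTop atTop) (b : ℝ) (hb : 0 < b)
    (hasymp : (fun t : ℝ => f t - (Real.log t + b * Real.log (Real.log t)))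
      =O[atTop] (fun _ : ℝ => (1 : ℝ))) :
    (∀ k : ℕ,
      (∫⁻ t in Ioi (0:ℝ), ENNReal.ofReal (f t ^ k * Real.exp (-f t)) = ⊤ ↔ b - 1 ≤ (k : ℝ))) ∧
    sInf {k : ℕ | ∫⁻ t in Ioi (0:ℝ), ENNReal.ofReal (f t ^ k * Real.exp (-f t)) = ⊤}
      = ⌈b⌉₊ - 1 := by
  have hfm : AEMeasurable f (volume.restrict (Ioi (0:ℝ))) :=
    aemeasurable_restrict_of_monotoneOn measurableSet_Ioi (hmono.mono Ioi_subset_Ici_self)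
  rw [isBigO_iff] at hasymp
  obtain ⟨C, hC⟩ := hasymp
  simp only [norm_one, mul_one, Real.norm_eq_abs] at hC
  rw [eventually_atTop] at hC
  obtain ⟨T0, hT0⟩ := hC
  have hCnn : 0 ≤ C := (abs_nonneg _).trans (hT0 (max T0 0) (le_max_left _ _))
  set T : ℝ := max T0 (Real.exp (1 + 2*C)) with hTdef
  have hTpos : 0 < T := lt_of_lt_of_le (Real.exp_pos _) (le_max_right _ _)
  have hTlog : 1 + 2*C ≤ Real.log T := by
    rw [← Real.log_exp (1 + 2*C)]
    exact Real.log_le_log (Real.exp_pos _) (le_max_right _ _)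
  have hTlog1 : 1 ≤ Real.log T := by linarith
  have hfact : ∀ t, t ∈ Ioi T → 0 < t ∧ 1 + 2*C ≤ Real.log t ∧
      |f t - (Real.log t + b * Real.log (Real.log t))| ≤ C := by
    intro t ht
    have h1 : 0 < t := lt_trans hTpos ht
    exact ⟨h1, hTlog.trans (Real.log_le_log hTpos ht.le),
      hT0 t ((le_max_left _ _).trans ht.le)⟩
  -- pointwise two-sided bounds on the integrand for t > T
  have bounds : ∀ (k : ℕ) (t : ℝ), t ∈ Ioi T →
      ((2:ℝ)⁻¹)^k * Real.exp (-C) * (Real.log t ^ ((k:ℝ) - b) / t)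
        ≤ f t ^ k * Real.exp (-f t) ∧
      f t ^ k * Real.exp (-f t)
        ≤ (1+b+C)^k * Real.exp C * (Real.log t ^ ((k:ℝ) - b) / t) := by
    intro k t ht
    obtain ⟨ht0, hlt, habs⟩ := hfact t ht
    set u := Real.log t with hu
    have hu1 : 1 ≤ u := by linarith
    have hu0 : 0 < u := by linarith
    have hlogu : 0 ≤ Real.log u := Real.log_nonneg hu1
    have habs' := abs_le.1 habs
    have hfl : u + b * Real.log u - C ≤ f t := by linarith [habs'.1]
    have hfu : f t ≤ u + b * Real.log u + C := by linarith [habs'.2]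
    have hblogu : 0 ≤ b * Real.log u := mul_nonneg hb.le hlogu
    have hflow : u / 2 ≤ f t := by linarith
    have hfup : f t ≤ (1+b+C) * u := by
      have hlu : Real.log u ≤ u := (Real.log_le_sub_one_of_pos hu0).trans (by linarith)
      have h1 : b * Real.log u ≤ b * u := mul_le_mul_of_nonneg_left hlu hb.le
      have h2 : C * 1 ≤ C * u := mul_le_mul_of_nonneg_left hu1 hCnn
      nlinarith
    have hE : Real.exp (-(u + b * Real.log u)) = u ^ (-b) / t := by
      rw [neg_add, Real.exp_add]
      have e1 : Real.exp (-u) = t⁻¹ := by rw [Real.exp_neg, Real.exp_log ht0]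
      have e2 : Real.exp (-(b * Real.log u)) = u ^ (-b) := by
        rw [Real.rpow_def_of_pos hu0]
        congr 1
        ring
      rw [e1, e2, div_eq_mul_inv]
      ring
    have hexp_le : Real.exp (-f t) ≤ Real.exp C * (u ^ (-b) / t) := by
      have h : -f t ≤ C + -(u + b * Real.log u) := by linarith
      calc Real.exp (-f t) ≤ Real.exp (C + -(u + b * Real.log u)) := Real.exp_le_exp.2 h
        _ = Real.exp C * (u ^ (-b) / t) := by rw [Real.exp_add, hE]
    have hexp_ge : Real.exp (-C) * (u ^ (-b) / t) ≤ Real.exp (-f t) := by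
      have h : -C + -(u + b * Real.log u) ≤ -f t := by linarith
      calc Real.exp (-C) * (u ^ (-b) / t) = Real.exp (-C + -(u + b * Real.log u)) := by
            rw [Real.exp_add, hE]
        _ ≤ Real.exp (-f t) := Real.exp_le_exp.2 h
    have hf0t : 0 ≤ f t := hf0 t ht0.le
    have hpow_le : f t ^ k ≤ ((1+b+C) * u) ^ k := pow_le_pow_left₀ hf0t hfup k
    have hpow_ge : (u/2)^k ≤ f t ^ k := pow_le_pow_left₀ (by positivity) hflow k
    have hmulpow : (u:ℝ)^k * u ^ (-b) = u ^ ((k:ℝ) - b) := by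
      rw [← Real.rpow_natCast u k, ← Real.rpow_add hu0]
      congr 1
    constructor
    · calc ((2:ℝ)⁻¹)^k * Real.exp (-C) * (u ^ ((k:ℝ) - b) / t)
          = (u/2)^k * (Real.exp (-C) * (u ^ (-b) / t)) := by
            rw [← hmulpow]; ring
        _ ≤ f t ^ k * Real.exp (-f t) := by
            exact mul_le_mul hpow_ge hexp_ge
              (mul_nonneg (Real.exp_pos _).le
                (div_nonneg (Real.rpow_nonneg hu0.le _) ht0.le)) (pow_nonneg hf0t k)
    · calc f t ^ k * Real.exp (-f t)
          ≤ ((1+b+C) * u) ^ k * (Real.exp C * (u ^ (-b) / t)) := by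
            apply mul_le_mul hpow_le hexp_le (Real.exp_pos _).le (pow_nonneg (by positivity) k)
        _ = (1+b+C)^k * Real.exp C * (u ^ ((k:ℝ) - b) / t) := by
            rw [mul_pow, ← hmulpow]; ring
  have hgnn : ∀ (k : ℕ) (t : ℝ), t ∈ Ioi (0:ℝ) → 0 ≤ f t ^ k * Real.exp (-f t) :=
    fun k t ht => mul_nonneg (pow_nonneg (hf0 t (le_of_lt ht)) k) (Real.exp_pos _).le
  have key : ∀ k : ℕ,
      (∫⁻ t in Ioi (0:ℝ), ENNReal.ofReal (f t ^ k * Real.exp (-f t)) = ⊤ ↔ b - 1 ≤ (k : ℝ)) := by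
    intro k
    constructor
    · -- divergence forces k ≥ b - 1 : contrapositive (finiteness when k < b - 1)
      intro htop
      by_contra hlt
      push_neg at hlt
      have hp : (k:ℝ) - b < -1 := by linarith
      have hfin : ∫⁻ t in Ioi (0:ℝ), ENNReal.ofReal (f t ^ k * Real.exp (-f t)) < ⊤ := by
        have hsplit : Ioc (0:ℝ) T ∪ Ioi T = Ioi 0 := Ioc_union_Ioi_eq_Ioi hTpos.le
        rw [← hsplit, lintegral_union measurableSet_Ioi (Ioc_disjoint_Ioi le_rfl)]
        have part1 : ∫⁻ t in Ioc (0:ℝ) T, ENNReal.ofReal (f t ^ k * Real.exp (-f t)) < ⊤ := by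
          have hb1 : ∫⁻ t in Ioc (0:ℝ) T, ENNReal.ofReal (f t ^ k * Real.exp (-f t))
              ≤ ∫⁻ _ in Ioc (0:ℝ) T, ENNReal.ofReal (f T ^ k) := by
            apply setLIntegral_mono measurable_const
            intro t ht
            apply ENNReal.ofReal_le_ofReal
            have hft : f t ≤ f T := hmono ht.1.le hTpos.le ht.2
            have h1 : f t ^ k * Real.exp (-f t) ≤ f t ^ k * 1 := by
              apply mul_le_mul_of_nonneg_left _ (pow_nonneg (hf0 t ht.1.le) k)
              rw [Real.exp_le_one_iff]
              linarith [hf0 t ht.1.le]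
            calc f t ^ k * Real.exp (-f t) ≤ f t ^ k * 1 := h1
              _ = f t ^ k := mul_one _
              _ ≤ f T ^ k := pow_le_pow_left₀ (hf0 t ht.1.le) hft k
          refine lt_of_le_of_lt hb1 ?_
          rw [setLIntegral_const]
          exact ENNReal.mul_lt_top ENNReal.ofReal_lt_top measure_Ioc_lt_top
        have part2 : ∫⁻ t in Ioi T, ENNReal.ofReal (f t ^ k * Real.exp (-f t)) < ⊤ := by
          have hint : IntegrableOn
              (fun t => (1+b+C)^k * Real.exp C * (Real.log t ^ ((k:ℝ) - b) / t)) (Ioi T) :=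
            (aux_int hp hTpos hTlog1).const_mul _
          have hb2 : ∫⁻ t in Ioi T, ENNReal.ofReal (f t ^ k * Real.exp (-f t))
              ≤ ∫⁻ t in Ioi T,
                (‖(1+b+C)^k * Real.exp C * (Real.log t ^ ((k:ℝ) - b) / t)‖₊ : ℝ≥0∞) := by
            apply setLIntegral_mono_ae' measurableSet_Ioi
            refine ae_of_all _ fun t ht => ?_
            exact (ENNReal.ofReal_le_ofReal (bounds k t ht).2).trans
              (Real.ofReal_le_enorm _)
          exact lt_of_le_of_lt hb2 hint.hasFiniteIntegral
        exact ENNReal.add_lt_top.2 ⟨part1, part2⟩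
      exact absurd htop hfin.ne
    · -- k ≥ b - 1 forces divergence
      intro hk
      by_contra hne
      have hfin : ∫⁻ t in Ioi (0:ℝ), ENNReal.ofReal (f t ^ k * Real.exp (-f t)) < ⊤ :=
        lt_top_iff_ne_top.2 hne
      have hgmeas : AEStronglyMeasurable (fun t => f t ^ k * Real.exp (-f t))
          (volume.restrict (Ioi (0:ℝ))) :=
        ((hfm.pow_const k).mul (Real.measurable_exp.comp_aemeasurable hfm.neg)).aestronglyMeasurable
      have hgint : IntegrableOn (fun t => f t ^ k * Real.exp (-f t)) (Ioi 0) := by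
        refine ⟨hgmeas, ?_⟩
        rw [hasFiniteIntegral_iff_ofReal]
        · exact hfin
        · exact (ae_restrict_iff' measurableSet_Ioi).2 (ae_of_all _ (hgnn k))
      have hgT : IntegrableOn (fun t => f t ^ k * Real.exp (-f t)) (Ioi T) :=
        hgint.mono_set (Ioi_subset_Ioi hTpos.le)
      set c : ℝ := ((2:ℝ)⁻¹)^k * Real.exp (-C) with hc_def
      have hc : 0 < c := by positivity
      apply aux_notint T
      apply Integrable.mono' (hgT.const_mul c⁻¹)
        ((measurable_id'.mul Real.measurable_log).inv).aestronglyMeasurable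
      refine (ae_restrict_iff' measurableSet_Ioi).2 (ae_of_all _ ?_)
      intro t ht
      obtain ⟨ht0, hlt, -⟩ := hfact t ht
      set u := Real.log t with hu
      have hu1 : 1 ≤ u := by linarith
      have hu0 : 0 < u := by linarith
      have hr : u ^ (-1:ℝ) ≤ u ^ ((k:ℝ) - b) :=
        Real.rpow_le_rpow_of_exponent_le hu1 (by linarith)
      have e1 : (t * u)⁻¹ = u ^ (-1:ℝ) / t := by
        rw [Real.rpow_neg_one, mul_inv]
        ring
      have hnorm : ‖(t * Real.log t)⁻¹‖ = (t * u)⁻¹ := by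
        rw [Real.norm_eq_abs, abs_of_pos]
        positivity
      show ‖(t * Real.log t)⁻¹‖ ≤ _
      rw [hnorm, e1]
      calc u ^ (-1:ℝ) / t ≤ u ^ ((k:ℝ) - b) / t := by
            exact div_le_div_of_nonneg_right hr ht0.le
        _ = c⁻¹ * (c * (u ^ ((k:ℝ) - b) / t)) := (inv_mul_cancel_left₀ hc.ne' _).symm
        _ ≤ c⁻¹ * (f t ^ k * Real.exp (-f t)) :=
            mul_le_mul_of_nonneg_left (bounds k t ht).1 (inv_nonneg.2 hc.le)
  refine ⟨key, ?_⟩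
  have hset : {k : ℕ | ∫⁻ t in Ioi (0:ℝ), ENNReal.ofReal (f t ^ k * Real.exp (-f t)) = ⊤}
      = Ici (⌈b⌉₊ - 1) := by
    ext k
    simp only [mem_setOf_eq, mem_Ici, key k]
    constructor
    · intro h
      have hceil : ⌈b⌉₊ ≤ k + 1 := Nat.ceil_le.2 (by push_cast; linarith)
      omega
    · intro h
      have h1 : 1 ≤ ⌈b⌉₊ := Nat.one_le_ceil_iff.2 hb
      have h2 : ⌈b⌉₊ ≤ k + 1 := by omega
      have h3 : b ≤ ((k:ℝ) + 1) := by
        calc b ≤ (⌈b⌉₊ : ℝ) := Nat.le_ceil b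
          _ ≤ ((k + 1 : ℕ) : ℝ) := by exact_mod_cast h2
          _ = (k:ℝ) + 1 := by push_cast; ring
      linarith
  rw [hset, csInf_Ici]
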